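/- Consider the coupled linear system u' = c e^{−ar} u + c e^{(2−a)r} v + c e^{(3−a)r}, v' = c e^{−2r} u + c e^{−ar} v on [r₀, ∞), with constant c > 0 and 0 < a < 2. Then every solution satisfies u = O(e^{(3−a)r}), and v = O(e^{(1−a)r}) if 0 < a < 1, v = O(r) if a = 1, and v = O(1) if a > 1. -/

import Mathlib

open Real

/-- Monotone comparison on a half-line. -/
lemma mono_aux (r₀ : ℝ) (f f' : ℝ → ℝ)
    (hf : ∀ r ≥ r₀, HasDerivAt f (f' r) r) (h : ∀ r ≥ r₀, 0 ≤ f' r) :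
    MonotoneOn f (Set.Ici r₀) := by
  apply monotoneOn_of_deriv_nonneg (convex_Ici r₀)
  · exact fun x hx => ((hf x hx).continuousAt).continuousWithinAt
  · intro x hx
    rw [interior_Ici] at hx
    exact ((hf x (le_of_lt hx)).differentiableAt).differentiableWithinAt
  · intro x hx
    rw [interior_Ici] at hx
    rw [(hf x (le_of_lt hx)).deriv]
    exact h x (le_of_lt hx)

/-- Integrated bound: `|f' | ≤ g'` gives `|f r - f r₀| ≤ g r - g r₀`. -/
lemma abs_sub_le_of_deriv (r₀ : ℝ) (f g f' g' : ℝ → ℝ)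
    (hf : ∀ r ≥ r₀, HasDerivAt f (f' r) r) (hg : ∀ r ≥ r₀, HasDerivAt g (g' r) r)
    (h : ∀ r ≥ r₀, |f' r| ≤ g' r) : ∀ r ≥ r₀, |f r - f r₀| ≤ g r - g r₀ := by
  intro r hr
  have h1 : MonotoneOn (fun x => g x - f x) (Set.Ici r₀) := by
    apply mono_aux r₀ _ (fun x => g' x - f' x) (fun x hx => (hg x hx).sub (hf x hx))
    intro x hx
    have := h x hx
    have := abs_le.1 this
    linarith [this.2]
  have h2 : MonotoneOn (fun x => g x + f x) (Set.Ici r₀) := by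
    apply mono_aux r₀ _ (fun x => g' x + f' x) (fun x hx => (hg x hx).add (hf x hx))
    intro x hx
    have := (abs_le.1 (h x hx)).1
    linarith
  have e1 := h1 (Set.self_mem_Ici) (Set.mem_Ici.2 hr) hr
  have e2 := h2 (Set.self_mem_Ici) (Set.mem_Ici.2 hr) hr
  simp only at e1 e2
  rw [abs_le]; constructor <;> linarith

/-- Dissipative bound on a half line. -/
lemma bound_of_dissipative (r₁ δ C : ℝ) (hδ : 0 < δ) (f f' : ℝ → ℝ)
    (hf : ∀ r ≥ r₁, HasDerivAt f (f' r) r) (h : ∀ r ≥ r₁, f' r ≤ -δ * f r + C) :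
    ∀ r ≥ r₁, f r ≤ max (f r₁) (C / δ) := by
  intro r hr
  have hanti : AntitoneOn (fun x => (f x - C / δ) * exp (δ * x)) (Set.Ici r₁) := by
    apply antitoneOn_of_deriv_nonpos (convex_Ici r₁)
    · intro x hx
      exact (((hf x hx).sub_const _).mul
        (((hasDerivAt_id x).const_mul δ).exp)).continuousAt.continuousWithinAt
    · intro x hx
      rw [interior_Ici] at hx
      exact ((((hf x hx.le).sub_const _).mul
        (((hasDerivAt_id x).const_mul δ).exp))).differentiableAt.differentiableWithinAt
    · intro x hx
      rw [interior_Ici] at hx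
      have hd : HasDerivAt (fun x => (f x - C / δ) * exp (δ * x))
          (f' x * exp (δ * x) + (f x - C / δ) * (exp (δ * x) * δ)) x := by
        have h2 : HasDerivAt (fun x => exp (δ * x)) (exp (δ * x) * δ) x := by
          simpa using (((hasDerivAt_id x).const_mul δ).exp)
        exact ((hf x hx.le).sub_const (C / δ)).mul h2
      rw [hd.deriv]
      have hb := h x hx.le
      have he : 0 < exp (δ * x) := exp_pos _
      have : f' x * exp (δ * x) + (f x - C / δ) * (exp (δ * x) * δ)
          = (f' x + δ * f x - C) * exp (δ * x) := by field_simp; ring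
      rw [this]
      apply mul_nonpos_of_nonpos_of_nonneg _ he.le
      linarith
  have := hanti (Set.self_mem_Ici) (Set.mem_Ici.2 hr) hr
  simp only at this
  by_cases hcase : f r ≤ C / δ
  · exact le_trans hcase (le_max_right _ _)
  · push_neg at hcase
    have he1 : exp (δ * r₁) ≤ exp (δ * r) := exp_le_exp.2 (by nlinarith)
    have he0 : 0 < exp (δ * r₁) := exp_pos _
    have : (f r - C / δ) * exp (δ * r₁) ≤ (f r₁ - C / δ) * exp (δ * r₁) := by
      nlinarith
    have : f r ≤ f r₁ := by nlinarith
    exact le_trans this (le_max_left _ _)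
lemma key_ineq (a c d L ε A B : ℝ) (hc : 0 < c) (hd : 0 < d) (hL : 0 < L)
    (hdL : d * L = c) (hεpos : 0 < ε) (hεd : ε ≤ d / 2) (hεLd : ε * L ≤ d)
    (hd3a : d ≤ (3 - a) / 2) (hd12 : d ≤ 1 / 2) :
    2 * (ε + a - 3) * A ^ 2 + 2 * c * (A * B) + 2 * c * A
      + 2 * ε * L ^ 2 * (A * B) + 2 * (ε - 1) * (L ^ 2 * B ^ 2)
      ≤ -(d / 2) * (A ^ 2 + L ^ 2 * B ^ 2) + 2 * c ^ 2 / d := by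
  have hA : (0:ℝ) ≤ A ^ 2 := sq_nonneg _
  have hB : (0:ℝ) ≤ L ^ 2 * B ^ 2 := by positivity
  have h1 : 2 * c * (A * B) ≤ d * A ^ 2 + d * (L ^ 2 * B ^ 2) := by
    nlinarith [mul_nonneg hd.le (sq_nonneg (A - L * B))]
  have h2 : 2 * ε * L ^ 2 * (A * B) ≤ d * A ^ 2 + d * (L ^ 2 * B ^ 2) := by
    have s1 : 0 ≤ ε * L * (A - L * B) ^ 2 :=
      mul_nonneg (mul_nonneg hεpos.le hL.le) (sq_nonneg _)
    have s2 : ε * L * (A ^ 2 + L ^ 2 * B ^ 2) ≤ d * (A ^ 2 + L ^ 2 * B ^ 2) :=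
      mul_le_mul_of_nonneg_right hεLd (by positivity)
    nlinarith [s1, s2]
  have h3 : 2 * c * A ≤ d / 2 * A ^ 2 + 2 * c ^ 2 / d := by
    have s1 : 0 ≤ (d * A - 2 * c) ^ 2 / (2 * d) := by positivity
    calc 2 * c * A = (d / 2 * A ^ 2 + 2 * c ^ 2 / d) - (d * A - 2 * c) ^ 2 / (2 * d) := by
          field_simp; ring
    _ ≤ d / 2 * A ^ 2 + 2 * c ^ 2 / d := by linarith
  have hdiag1 : 2 * (ε + a - 3) * A ^ 2 ≤ -3 * d * A ^ 2 := by
    have h : 2 * (ε + a - 3) ≤ -3 * d := by linarith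
    nlinarith
  have hdiag2 : 2 * (ε - 1) * (L ^ 2 * B ^ 2) ≤ (d - 2) * (L ^ 2 * B ^ 2) := by
    have h : 2 * (ε - 1) ≤ d - 2 := by linarith
    nlinarith
  nlinarith [h1, h2, h3, hdiag1, hdiag2, hA, hB]

set_option maxHeartbeats 1000000 in
/-- Asymptotics for the first model system
`u' = c e^{-ar} u + c e^{(2-a)r} v + c e^{(3-a)r}`, `v' = c e^{-2r} u + c e^{-ar} v`
with `0 < a < 2`: every solution satisfies `u = O(e^{(3-a)r})`, and `v = O(e^{(1-a)r})` if
`a < 1`, `v = O(r)` if `a = 1`, `v = O(1)` if `a > 1`. -/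
theorem model_system_first_derivatives
    (r₀ a c : ℝ) (ha : 0 < a) (ha2 : a < 2) (hc : 0 < c)
    (u v : ℝ → ℝ)
    (hu : ∀ r ≥ r₀, HasDerivAt u
      (c * exp (-a * r) * u r + c * exp ((2 - a) * r) * v r + c * exp ((3 - a) * r)) r)
    (hv : ∀ r ≥ r₀, HasDerivAt v
      (c * exp (-2 * r) * u r + c * exp (-a * r) * v r) r) :
    (∃ C : ℝ, ∀ r ≥ r₀, |u r| ≤ C * exp ((3 - a) * r)) ∧
    (a < 1 → ∃ C : ℝ, ∀ r ≥ r₀, |v r| ≤ C * exp ((1 - a) * r)) ∧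
    (a = 1 → ∃ C : ℝ, ∀ r ≥ r₀, |v r| ≤ C * (1 + |r|)) ∧
    (1 < a → ∃ C : ℝ, ∀ r ≥ r₀, |v r| ≤ C) := by
  -- scaled functions
  set U : ℝ → ℝ := fun r => u r * exp ((a - 3) * r) with hUdef
  set V : ℝ → ℝ := fun r => v r * exp (-r) with hVdef
  have hU : ∀ r ≥ r₀, HasDerivAt U
      ((c * exp (-a * r) + a - 3) * U r + c * V r + c) r := by
    intro r hr
    have h1 : HasDerivAt (fun x => exp ((a - 3) * x)) ((a - 3) * exp ((a - 3) * r)) r := by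
      simpa [mul_comm] using (((hasDerivAt_id r).const_mul (a - 3)).exp)
    have h2 : HasDerivAt U _ r := (hu r hr).mul h1
    convert h2 using 1
    have e1 : exp ((2 - a) * r) * exp ((a - 3) * r) = exp (-r) := by
      rw [← Real.exp_add]; ring_nf
    have e2 : exp ((3 - a) * r) * exp ((a - 3) * r) = 1 := by
      rw [← Real.exp_add, show (3 - a) * r + (a - 3) * r = 0 by ring, Real.exp_zero]
    simp only [hUdef, hVdef]
    linear_combination (-(c * v r)) * e1 - c * e2
  have hV : ∀ r ≥ r₀, HasDerivAt V
      (c * exp (-a * r) * U r + (c * exp (-a * r) - 1) * V r) r := by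
    intro r hr
    have h1 : HasDerivAt (fun x => exp (-x)) (-exp (-r)) r := by
      simpa using ((hasDerivAt_id r).neg).exp
    have h2 : HasDerivAt V _ r := (hv r hr).mul h1
    convert h2 using 1
    have e3 : exp (-a * r) * exp ((a - 3) * r) = exp (-2 * r) * exp (-r) := by
      rw [← Real.exp_add, ← Real.exp_add]; ring_nf
    simp only [hUdef, hVdef]
    linear_combination (c * u r) * e3
  -- constants
  set d : ℝ := min (3 - a) 1 / 2 with hddef
  have hd : 0 < d := by
    have : 0 < min (3 - a) 1 := lt_min (by linarith) one_pos
    simp only [hddef]; linarith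
  have hd3a : d ≤ (3 - a) / 2 := by
    simp only [hddef]; have := min_le_left (3 - a) 1; linarith
  have hd12 : d ≤ 1 / 2 := by
    simp only [hddef]; have := min_le_right (3 - a) 1; linarith
  set L : ℝ := c / d with hLdef
  have hL : 0 < L := div_pos hc hd
  have hdL : d * L = c := by rw [hLdef]; field_simp
  set ε₁ : ℝ := min (d / 2) (d * d / c) with hε₁def
  have hε₁ : 0 < ε₁ := lt_min (by linarith) (by positivity)
  have hε₁d : ε₁ ≤ d / 2 := min_le_left _ _
  have hε₁L : ε₁ * L ≤ d := by
    have h1 : ε₁ ≤ d * d / c := min_le_right _ _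
    calc ε₁ * L ≤ (d * d / c) * L := by nlinarith
    _ = d := by rw [hLdef]; field_simp
  set r₁ : ℝ := max r₀ (Real.log (c / ε₁) / a) with hr₁def
  have hr₁0 : r₀ ≤ r₁ := le_max_left _ _
  have hεsmall : ∀ r ≥ r₁, c * exp (-a * r) ≤ ε₁ := by
    intro r hr
    have h1 : Real.log (c / ε₁) / a ≤ r := le_trans (le_max_right _ _) hr
    have h2 : -a * r ≤ Real.log (ε₁ / c) := by
      rw [Real.log_div hε₁.ne' hc.ne']
      rw [Real.log_div hc.ne' hε₁.ne'] at h1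
      have := (div_le_iff₀ ha).1 h1
      nlinarith
    have h3 : exp (-a * r) ≤ ε₁ / c := by
      calc exp (-a * r) ≤ exp (Real.log (ε₁ / c)) := exp_le_exp.2 h2
      _ = ε₁ / c := Real.exp_log (by positivity)
    calc c * exp (-a * r) ≤ c * (ε₁ / c) := by nlinarith
    _ = ε₁ := by field_simp
  -- Lyapunov function
  set ψ : ℝ → ℝ := fun r => U r * U r + L ^ 2 * (V r * V r) with hψdef
  set ψ' : ℝ → ℝ := fun r =>
      (((c * exp (-a * r) + a - 3) * U r + c * V r + c) * U r
        + U r * ((c * exp (-a * r) + a - 3) * U r + c * V r + c))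
      + L ^ 2 * ((c * exp (-a * r) * U r + (c * exp (-a * r) - 1) * V r) * V r
        + V r * (c * exp (-a * r) * U r + (c * exp (-a * r) - 1) * V r)) with hψ'def
  have hψ : ∀ r ≥ r₀, HasDerivAt ψ (ψ' r) r := by
    intro r hr
    exact ((hU r hr).mul (hU r hr)).add (((hV r hr).mul (hV r hr)).const_mul (L ^ 2))
  have hkey : ∀ r ≥ r₁, ψ' r ≤ -(d / 2) * ψ r + 2 * c ^ 2 / d := by
    intro r hr
    have hε := hεsmall r hr
    have hεpos : 0 < c * exp (-a * r) := by positivity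
    have hεd : c * exp (-a * r) ≤ d / 2 := le_trans hε hε₁d
    have hεLd : c * exp (-a * r) * L ≤ d := by
      have : c * exp (-a * r) * L ≤ ε₁ * L := by nlinarith
      linarith
    have expand : ψ' r = 2 * (c * exp (-a * r) + a - 3) * U r ^ 2 + 2 * c * (U r * V r)
        + 2 * c * U r + 2 * (c * exp (-a * r)) * L ^ 2 * (U r * V r)
        + 2 * (c * exp (-a * r) - 1) * (L ^ 2 * V r ^ 2) := by
      simp only [hψ'def]; ring
    have hψr : ψ r = U r ^ 2 + L ^ 2 * V r ^ 2 := by simp only [hψdef]; ring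
    rw [expand, hψr]
    exact key_ineq a c d L (c * exp (-a * r)) (U r) (V r) hc hd hL hdL hεpos hεd hεLd hd3a hd12
  -- bound ψ on [r₁, ∞)
  have hψb1 : ∀ r ≥ r₁, ψ r ≤ max (ψ r₁) ((2 * c ^ 2 / d) / (d / 2)) :=
    bound_of_dissipative r₁ (d / 2) (2 * c ^ 2 / d) (by linarith) ψ ψ'
      (fun r hr => hψ r (le_trans hr₁0 hr))
      (fun r hr => by have := hkey r hr; linarith)
  -- bound ψ on [r₀, r₁]
  have hcont : ContinuousOn ψ (Set.Icc r₀ r₁) :=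
    fun x hx => ((hψ x hx.1).continuousAt).continuousWithinAt
  obtain ⟨B₀, hB₀⟩ := (isCompact_Icc).exists_bound_of_continuousOn hcont
  set M : ℝ := max B₀ (max (ψ r₁) ((2 * c ^ 2 / d) / (d / 2))) with hMdef
  have hM : ∀ r ≥ r₀, ψ r ≤ M := by
    intro r hr
    rcases le_total r r₁ with h | h
    · have := hB₀ r ⟨hr, h⟩
      have h2 : ψ r ≤ B₀ := le_trans (le_abs_self _) this
      exact le_trans h2 (le_max_left _ _)
    · exact le_trans (hψb1 r h) (le_max_right _ _)
  set Cu : ℝ := Real.sqrt M with hCudef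
  have hCu0 : (0:ℝ) ≤ Cu := by rw [hCudef]; positivity
  have hu_bound : ∀ r ≥ r₀, |u r| ≤ Cu * exp ((3 - a) * r) := by
    intro r hr
    have h0 := hM r hr
    have h1 : U r ^ 2 ≤ M := by
      simp only [hψdef] at h0
      nlinarith [mul_nonneg (sq_nonneg L) (mul_self_nonneg (V r))]
    have h2 : |U r| ≤ Cu := by
      rw [← Real.sqrt_sq_eq_abs, hCudef]; exact Real.sqrt_le_sqrt h1
    have h3 : u r = U r * exp ((3 - a) * r) := by
      simp only [hUdef]
      rw [mul_assoc, ← Real.exp_add, show (a - 3) * r + (3 - a) * r = 0 by ring,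
        Real.exp_zero, mul_one]
    rw [h3, abs_mul, abs_of_pos (exp_pos _)]
    exact mul_le_mul_of_nonneg_right h2 (exp_pos _).le
  -- integrating factor for v
  set p : ℝ → ℝ := fun r => exp (c / a * exp (-a * r)) with hpdef
  set w : ℝ → ℝ := fun r => p r * v r with hwdef
  have hp1 : ∀ r, 1 ≤ p r := fun r => Real.one_le_exp (by positivity)
  have hppos : ∀ r, 0 < p r := fun r => lt_of_lt_of_le one_pos (hp1 r)
  have hpbound : ∀ r ≥ r₀, p r ≤ exp (c / a * exp (-a * r₀)) := by
    intro r hr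
    simp only [hpdef]
    apply exp_le_exp.2
    have h1 : exp (-a * r) ≤ exp (-a * r₀) := exp_le_exp.2 (by nlinarith)
    exact mul_le_mul_of_nonneg_left h1 (by positivity)
  have hw : ∀ r ≥ r₀, HasDerivAt w (p r * (c * exp (-2 * r) * u r)) r := by
    intro r hr
    have h1 : HasDerivAt (fun x : ℝ => exp (-a * x)) (exp (-a * r) * (-a)) r := by
      simpa using ((hasDerivAt_id r).const_mul (-a)).exp
    have h2 := (h1.const_mul (c / a)).exp
    have h3 : HasDerivAt w _ r := h2.mul (hv r hr)
    convert h3 using 1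
    simp only [hpdef]
    field_simp
    ring
  set C₂ : ℝ := exp (c / a * exp (-a * r₀)) * c * Cu with hC₂def
  have hC₂ : 0 ≤ C₂ := by rw [hC₂def]; positivity
  have hw' : ∀ r ≥ r₀, |p r * (c * exp (-2 * r) * u r)| ≤ C₂ * exp ((1 - a) * r) := by
    intro r hr
    have h1 := hu_bound r hr
    have h2 := hpbound r hr
    have h3 : exp (-2 * r) * exp ((3 - a) * r) = exp ((1 - a) * r) := by
      rw [← Real.exp_add]; ring_nf
    have habs : |p r * (c * exp (-2 * r) * u r)| = p r * (c * exp (-2 * r)) * |u r| := by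
      rw [abs_mul, abs_mul, abs_of_pos (hppos r),
        abs_of_pos (show (0:ℝ) < c * exp (-2 * r) by positivity)]
      ring
    rw [habs]
    calc p r * (c * exp (-2 * r)) * |u r|
        ≤ exp (c / a * exp (-a * r₀)) * (c * exp (-2 * r)) * (Cu * exp ((3 - a) * r)) := by
          apply mul_le_mul (mul_le_mul_of_nonneg_right h2 (by positivity)) h1 (abs_nonneg _)
            (by positivity)
      _ = C₂ * exp ((1 - a) * r) := by
          rw [hC₂def]; linear_combination (exp (c / a * exp (-a * r₀)) * c * Cu) * h3
  have hv_abs : ∀ r, |v r| ≤ |w r| := by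
    intro r
    have : w r = p r * v r := rfl
    rw [this, abs_mul, abs_of_pos (hppos r)]
    have h := mul_le_mul_of_nonneg_right (hp1 r) (abs_nonneg (v r))
    linarith
  refine ⟨⟨Cu, hu_bound⟩, ?_, ?_, ?_⟩
  · -- a < 1
    intro h1a
    have h1a' : (0:ℝ) < 1 - a := by linarith
    have hg : ∀ r ≥ r₀, HasDerivAt (fun x => C₂ / (1 - a) * exp ((1 - a) * x))
        (C₂ * exp ((1 - a) * r)) r := by
      intro r hr
      have : HasDerivAt (fun x => C₂ / (1 - a) * exp ((1 - a) * x)) _ r := (((hasDerivAt_id r).const_mul (1 - a)).exp).const_mul (C₂ / (1 - a))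
      convert this using 1
      simp only [id_eq]; field_simp
      try ring
    have hcomp := abs_sub_le_of_deriv r₀ w (fun x => C₂ / (1 - a) * exp ((1 - a) * x))
      _ _ hw hg hw'
    refine ⟨|w r₀| / exp ((1 - a) * r₀) + C₂ / (1 - a), ?_⟩
    intro r hr
    have h1 := hcomp r hr
    have h2 := hv_abs r
    have h3 : |w r| - |w r₀| ≤ |w r - w r₀| := by
      have := abs_sub_abs_le_abs_sub (w r) (w r₀); linarith
    have hg0 : (0:ℝ) ≤ C₂ / (1 - a) * exp ((1 - a) * r₀) :=
      mul_nonneg (div_nonneg hC₂ h1a'.le) (exp_pos _).le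
    have h5 : |w r₀| / exp ((1 - a) * r₀) * exp ((1 - a) * r₀) = |w r₀| :=
      div_mul_cancel₀ _ (exp_pos _).ne'
    have h6 : exp ((1 - a) * r₀) ≤ exp ((1 - a) * r) := exp_le_exp.2 (by nlinarith)
    have h7 : |w r₀| / exp ((1 - a) * r₀) * exp ((1 - a) * r₀)
        ≤ |w r₀| / exp ((1 - a) * r₀) * exp ((1 - a) * r) :=
      mul_le_mul_of_nonneg_left h6 (div_nonneg (abs_nonneg _) (exp_pos _).le)
    try simp only at h1
    nlinarith [h1, h2, h3, hg0, h5, h7]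
  · -- a = 1
    intro h1a
    subst h1a
    have hg : ∀ r ≥ r₀, HasDerivAt (fun x => C₂ * x) C₂ r := by
      intro r hr
      simpa using (hasDerivAt_id r).const_mul C₂
    have hw'1 : ∀ r ≥ r₀, |p r * (c * exp (-2 * r) * u r)| ≤ C₂ := by
      intro r hr
      have := hw' r hr
      simpa using this
    have hcomp := abs_sub_le_of_deriv r₀ w (fun x => C₂ * x) _ _ hw hg hw'1
    refine ⟨|w r₀| + C₂ * (1 + |r₀|), ?_⟩
    intro r hr
    have h1 := hcomp r hr
    have h2 := hv_abs r
    have h3 : |w r| - |w r₀| ≤ |w r - w r₀| := by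
      have := abs_sub_abs_le_abs_sub (w r) (w r₀); linarith
    try simp only at h1
    nlinarith [abs_nonneg r, abs_nonneg r₀, le_abs_self r, neg_abs_le r₀,
      abs_nonneg (w r₀), mul_nonneg (abs_nonneg (w r₀)) (abs_nonneg r),
      mul_nonneg hC₂ (mul_nonneg (abs_nonneg r₀) (abs_nonneg r)),
      mul_nonneg hC₂ (by linarith [le_abs_self r, neg_abs_le r₀] :
        (0:ℝ) ≤ |r| + |r₀| - (r - r₀))]
  · -- 1 < a
    intro h1a
    have h1a' : (0:ℝ) < a - 1 := by linarith
    have hg : ∀ r ≥ r₀, HasDerivAt (fun x => -(C₂ / (a - 1)) * exp ((1 - a) * x))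
        (C₂ * exp ((1 - a) * r)) r := by
      intro r hr
      have : HasDerivAt (fun x => -(C₂ / (a - 1)) * exp ((1 - a) * x)) _ r := (((hasDerivAt_id r).const_mul (1 - a)).exp).const_mul (-(C₂ / (a - 1)))
      convert this using 1
      simp only [id_eq]; field_simp
      ring
    have hcomp := abs_sub_le_of_deriv r₀ w (fun x => -(C₂ / (a - 1)) * exp ((1 - a) * x))
      _ _ hw hg hw'
    refine ⟨|w r₀| + C₂ / (a - 1) * exp ((1 - a) * r₀), ?_⟩
    intro r hr
    have h1 := hcomp r hr
    have h2 := hv_abs r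
    have h3 : |w r| - |w r₀| ≤ |w r - w r₀| := by
      have := abs_sub_abs_le_abs_sub (w r) (w r₀); linarith
    have h4 : (0:ℝ) ≤ C₂ / (a - 1) * exp ((1 - a) * r) :=
      mul_nonneg (div_nonneg hC₂ h1a'.le) (exp_pos _).le
    try simp only at h1
    nlinarith [h1, h2, h3, h4]
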